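/- arXiv:2302.02831 — 5 statements merged into one kernel-verified Lean document; each statement's English description precedes it below -/
import Mathlib

section
/- Every finite solvable group admits a uniform cyclic group factorization; that is, for every finite solvable group G there exist an integer k ≥ 1, cyclic subgroups H_1, …, H_k of G, and a positive integer t such that for every g ∈ G the number of tuples (h_1, …, h_k) ∈ H_1 × ⋯ × H_k with h_1 h_2 ⋯ h_k = g equals t. -/
open scoped Classical
open scoped commutatorElement

/-- The number of ways to write `g` as an ordered product `h₁ * h₂ * ⋯ * h_k`
with `hᵢ` an element of the `i`-th member of the list `L` of subsets of `G`. -/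
noncomputable def multCount {G : Type*} [Group G] (L : List (Set G)) (g : G) : ℕ :=
  Nat.card {h : List G // List.Forall₂ (· ∈ ·) h L ∧ h.prod = g}

section Aux

variable {G : Type*} [Group G]

lemma multCount_finite [Finite G] (L : List (Set G)) (g : G) :
    Finite {h : List G // List.Forall₂ (· ∈ ·) h L ∧ h.prod = g} := by
  have hinj : Function.Injective
      (fun x : {h : List G // List.Forall₂ (· ∈ ·) h L ∧ h.prod = g} =>
        (fun i : Fin L.length => x.1.get (Fin.cast x.2.1.length_eq.symm i))) := by
    intro x y hxy
    apply Subtype.ext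
    apply List.ext_get (x.2.1.length_eq.trans y.2.1.length_eq.symm)
    intro i hi1 hi2
    have h3 := congrFun hxy ⟨i, x.2.1.length_eq ▸ hi1⟩
    simpa using h3
  exact Finite.of_injective _ hinj

lemma multCount_singleton (S : Set G) (g : G) :
    multCount [S] g = if g ∈ S then 1 else 0 := by
  unfold multCount
  split_ifs with h
  · haveI : Nonempty {h : List G // List.Forall₂ (· ∈ ·) h [S] ∧ h.prod = g} :=
      ⟨⟨[g], List.Forall₂.cons h List.Forall₂.nil, by simp⟩⟩
    haveI : Subsingleton {h : List G // List.Forall₂ (· ∈ ·) h [S] ∧ h.prod = g} := by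
      constructor
      rintro ⟨h1, hf1, hp1⟩ ⟨h2, hf2, hp2⟩
      obtain ⟨a, l, haS, hl, rfl⟩ := List.forall₂_cons_right_iff.mp hf1
      obtain ⟨b, l', hbS, hl', rfl⟩ := List.forall₂_cons_right_iff.mp hf2
      rw [List.forall₂_nil_right_iff] at hl hl'
      subst hl; subst hl'
      simp only [List.prod_cons, List.prod_nil, mul_one] at hp1 hp2
      subst hp1; subst hp2; rfl
    exact Nat.card_unique
  · haveI : IsEmpty {h : List G // List.Forall₂ (· ∈ ·) h [S] ∧ h.prod = g} := by
      constructor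
      rintro ⟨h1, hf1, hp1⟩
      obtain ⟨a, l, haS, hl, rfl⟩ := List.forall₂_cons_right_iff.mp hf1
      rw [List.forall₂_nil_right_iff] at hl
      subst hl
      simp only [List.prod_cons, List.prod_nil, mul_one] at hp1
      exact h (hp1 ▸ haS)
    exact Nat.card_of_isEmpty

/-- Peeling off the first factor. -/
lemma multCount_cons_sigma (S : Set G) (L : List (Set G)) (g : G) :
    multCount (S :: L) g =
      Nat.card (Σ s : S, {h : List G // List.Forall₂ (· ∈ ·) h L ∧ h.prod = (s : G)⁻¹ * g}) := by
  apply Nat.card_congr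
  refine (Equiv.ofBijective
    (fun x : (Σ s : S, {h : List G // List.Forall₂ (· ∈ ·) h L ∧ h.prod = (s : G)⁻¹ * g}) =>
      (⟨(x.1 : G) :: x.2.1, List.Forall₂.cons x.1.2 x.2.2.1, by
        rw [List.prod_cons, x.2.2.2, mul_inv_cancel_left]⟩ :
        {h : List G // List.Forall₂ (· ∈ ·) h (S :: L) ∧ h.prod = g}))
    ⟨?_, ?_⟩).symm
  · rintro ⟨⟨s, hs⟩, ⟨h, hh⟩⟩ ⟨⟨s', hs'⟩, ⟨h', hh'⟩⟩ hfeq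
    simp only [Subtype.mk.injEq, List.cons.injEq] at hfeq
    obtain ⟨rfl, rfl⟩ := hfeq
    rfl
  · rintro ⟨h, hf, hp⟩
    obtain ⟨a, l, haS, hl, rfl⟩ := List.forall₂_cons_right_iff.mp hf
    rw [List.prod_cons] at hp
    exact ⟨⟨⟨a, haS⟩, ⟨l, hl, by rw [← hp, inv_mul_cancel_left]⟩⟩, rfl⟩

lemma isCyclic_zpowers (g : G) : IsCyclic (Subgroup.zpowers g) := by
  constructor
  refine ⟨⟨g, Subgroup.mem_zpowers g⟩, ?_⟩
  rintro ⟨x, hx⟩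
  obtain ⟨k, hk⟩ := Subgroup.mem_zpowers_iff.mp hx
  exact Subgroup.mem_zpowers_iff.mpr ⟨k, Subtype.ext (by simpa using hk)⟩

lemma commutator_ne_top (H : Type*) [Group H] [Group.IsSolvable H] [Nontrivial H] :
    commutator H ≠ ⊤ := by
  intro h
  have key : ∀ n, derivedSeries H n = ⊤ := by
    intro n
    induction n with
    | zero => rfl
    | succ n ih =>
      rw [derivedSeries_succ, ih, ← commutator_def, h]
  obtain ⟨n, hn⟩ := Group.IsSolvable.solvable (G := H)
  rw [key n] at hn
  exact top_ne_bot hn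

end Aux

section Main

variable {G : Type*} [Group G]

/-- The key induction: every subgroup `K` of a finite solvable group is uniformly factored
by a nonempty list of cyclic subgroups. -/
lemma key_induction [Finite G] [Group.IsSolvable G] :
    ∀ (n : ℕ) (K : Subgroup G), Nat.card K ≤ n →
      ∃ (L : List (Set G)) (t : ℕ), L ≠ [] ∧ 0 < t ∧
        (∀ S ∈ L, ∃ H : Subgroup G, IsCyclic H ∧ S = (H : Set G)) ∧
        ∀ g : G, multCount L g = if g ∈ K then t else 0 := by
  intro n
  induction n with
  | zero =>
    intro K hK
    exact absurd (Nat.card_pos.trans_le hK) (lt_irrefl 0)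
  | succ n ih =>
    intro K hK
    by_cases hKbot : K = ⊥
    · subst hKbot
      refine ⟨[((⊥ : Subgroup G) : Set G)], 1, by simp, one_pos, ?_, ?_⟩
      · rintro S hS
        simp only [List.mem_singleton] at hS
        exact ⟨⊥, isCyclic_of_subsingleton, hS⟩
      · intro g
        rw [multCount_singleton]
        rfl
    · haveI : Nontrivial K := K.nontrivial_iff_ne_bot.mpr hKbot
      haveI : Finite (Subgroup K) :=
        Finite.of_injective (fun H : Subgroup K => (H : Set K)) SetLike.coe_injective
      -- find a coatom above the commutator subgroup of K
      obtain ⟨M, hM, hle⟩ :=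
        (eq_top_or_exists_le_coatom (commutator K)).resolve_left (commutator_ne_top K)
      haveI hMnormal : M.Normal := by
        constructor
        intro m hm k
        have h1 : ⁅k, m⁆ ∈ commutator K := by
          rw [commutator_def]
          exact Subgroup.commutator_mem_commutator (Subgroup.mem_top k) (Subgroup.mem_top m)
        have h2 : k * m * k⁻¹ = ⁅k, m⁆ * m := by group
        rw [h2]
        exact mul_mem (hle h1) hm
      -- a generator of K modulo M
      obtain ⟨k₀, hk₀⟩ : ∃ k₀ : K, k₀ ∉ M := by
        by_contra hcon
        push_neg at hcon
        exact hM.1 ((Subgroup.eq_top_iff' M).mpr hcon)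
      have hgen : ∀ k : K, ∃ mz : ℤ, (k₀ ^ mz)⁻¹ * k ∈ M := by
        set P := Subgroup.comap (QuotientGroup.mk' M)
          (Subgroup.zpowers ((k₀ : K) : K ⧸ M)) with hPdef
        have hMP : M ≤ P := by
          intro m hm
          rw [Subgroup.mem_comap]
          have : (QuotientGroup.mk' M) m = 1 := by
            rw [QuotientGroup.mk'_apply, QuotientGroup.eq_one_iff]
            exact hm
          rw [this]
          exact one_mem _
        have hk₀P : k₀ ∈ P := by
          rw [Subgroup.mem_comap]
          exact Subgroup.mem_zpowers _
        have hP : P = ⊤ := by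
          refine hM.2 P (lt_of_le_of_ne hMP ?_)
          intro h
          rw [← h] at hk₀P
          exact hk₀ hk₀P
        intro k
        have hkP : k ∈ P := hP ▸ Subgroup.mem_top k
        rw [Subgroup.mem_comap, Subgroup.mem_zpowers_iff] at hkP
        obtain ⟨mz, hmz⟩ := hkP
        simp only [QuotientGroup.mk'_apply] at hmz
        refine ⟨mz, ?_⟩
        have : ((k₀ ^ mz : K) : K ⧸ M) = (k : K ⧸ M) := by
          rw [← hmz]
          simp
        exact QuotientGroup.eq.mp this
      -- push M into G and apply the induction hypothesis
      set M' : Subgroup G := M.map K.subtype with hM'def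
      have hM'K : M' ≤ K := Subgroup.map_subtype_le M
      have hk₀M' : (k₀ : G) ∉ M' := by
        intro hmem
        obtain ⟨m, hm, hcoe⟩ := Subgroup.mem_map.mp hmem
        have : m = k₀ := Subtype.ext hcoe
        exact hk₀ (this ▸ hm)
      have hlt : Nat.card M' < Nat.card K := by
        rw [← SetLike.coe_sort_coe M', ← SetLike.coe_sort_coe K,
          Nat.card_coe_set_eq, Nat.card_coe_set_eq]
        refine Set.ncard_lt_ncard ?_ (Set.toFinite _)
        constructor
        · exact fun x hx => hM'K hx
        · intro hsub
          exact hk₀M' (hsub k₀.2)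
      obtain ⟨L, t, hLne, ht, hcyc, hcount⟩ := ih M' (by omega)
      -- the new cyclic factor
      set C : Subgroup G := Subgroup.zpowers (k₀ : G) with hCdef
      have hCK : C ≤ K := Subgroup.zpowers_le.mpr k₀.2
      haveI : Finite ((C : Set G)) := Set.toFinite _
      set m : ℕ := Nat.card {c : (C : Set G) // (c : G) ∈ M'} with hmdef
      have hmpos : 0 < m := by
        rw [hmdef]
        haveI : Nonempty {c : (C : Set G) // (c : G) ∈ M'} :=
          ⟨⟨⟨1, one_mem C⟩, one_mem M'⟩⟩
        exact Nat.card_pos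
      refine ⟨(C : Set G) :: L, t * m, List.cons_ne_nil _ _, Nat.mul_pos ht hmpos, ?_, ?_⟩
      · rintro S hS
        rcases List.mem_cons.mp hS with h | h
        · exact ⟨C, isCyclic_zpowers _, h⟩
        · exact hcyc S h
      · intro g
        rw [multCount_cons_sigma]
        haveI : ∀ s : (C : Set G), Finite
            {h : List G // List.Forall₂ (· ∈ ·) h L ∧ h.prod = (s : G)⁻¹ * g} :=
          fun s => multCount_finite L _
        haveI : Fintype ((C : Set G)) := Fintype.ofFinite _
        haveI : ∀ s : (C : Set G), Fintype
            {h : List G // List.Forall₂ (· ∈ ·) h L ∧ h.prod = (s : G)⁻¹ * g} :=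
          fun s => Fintype.ofFinite _
        rw [Nat.card_eq_fintype_card, Fintype.card_sigma]
        have hfib : ∀ s : (C : Set G),
            Fintype.card {h : List G // List.Forall₂ (· ∈ ·) h L ∧ h.prod = (s : G)⁻¹ * g}
              = if (s : G)⁻¹ * g ∈ M' then t else 0 := by
          intro s
          rw [← Nat.card_eq_fintype_card]
          exact hcount _
        rw [Finset.sum_congr rfl (fun s _ => hfib s)]
        by_cases hg : g ∈ K
        · rw [if_pos hg]
          -- find c₀ ∈ C in the same M'-coset as g
          obtain ⟨mz, hmz⟩ := hgen ⟨g, hg⟩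
          have hc₀C : (k₀ : G) ^ mz ∈ C := Subgroup.mem_zpowers_iff.mpr ⟨mz, rfl⟩
          have hc₀ : ((k₀ : G) ^ mz)⁻¹ * g ∈ M' := by
            refine Subgroup.mem_map.mpr ⟨(k₀ ^ mz)⁻¹ * ⟨g, hg⟩, hmz, ?_⟩
            simp
          classical
          rw [Finset.sum_ite, Finset.sum_const, Finset.sum_const_zero, add_zero, smul_eq_mul,
            ← Fintype.card_subtype, ← Nat.card_eq_fintype_card]
          have he : Nat.card {s : (C : Set G) // (s : G)⁻¹ * g ∈ M'} = m := by
            rw [hmdef]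
            apply Nat.card_congr
            refine ⟨fun c => ⟨⟨((k₀ : G) ^ mz)⁻¹ * c, mul_mem (inv_mem hc₀C) c.1.2⟩, ?_⟩,
              fun c => ⟨⟨(k₀ : G) ^ mz * c, mul_mem hc₀C c.1.2⟩, ?_⟩, ?_, ?_⟩
            · have hid : (((k₀ : G) ^ mz)⁻¹ * g) * ((c.1 : G)⁻¹ * g)⁻¹
                  = ((k₀ : G) ^ mz)⁻¹ * c.1 := by group
              have hmm := mul_mem hc₀ (inv_mem c.2)
              rwa [hid] at hmm
            · have hid : (c.1 : G)⁻¹ * (((k₀ : G) ^ mz)⁻¹ * g)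
                  = ((k₀ : G) ^ mz * c.1)⁻¹ * g := by group
              have hmm := mul_mem (inv_mem c.2) hc₀
              rwa [hid] at hmm
            · rintro ⟨⟨c, hc⟩, h⟩
              apply Subtype.ext
              apply Subtype.ext
              simp
            · rintro ⟨⟨c, hc⟩, h⟩
              apply Subtype.ext
              apply Subtype.ext
              simp
          rw [he, mul_comm]
        · rw [if_neg hg]
          refine Finset.sum_eq_zero ?_
          intro s _
          rw [if_neg]
          intro hmem
          exact hg (by
            have := mul_mem (hCK s.2) (hM'K hmem)
            rwa [mul_inv_cancel_left] at this)

end Main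

/-- Every finite solvable group admits a uniform cyclic group factorization. -/
theorem solvable_admits_uniform_cyclic_group_factorization
    (G : Type*) [Group G] [Finite G] [Group.IsSolvable G] :
    ∃ (k : ℕ) (H : Fin k → Subgroup G) (t : ℕ),
      1 ≤ k ∧ 0 < t ∧ (∀ i, IsCyclic (H i)) ∧
      ∀ g : G, multCount (List.ofFn fun i => (H i : Set G)) g = t := by
  obtain ⟨L, t, hLne, ht, hcyc, hcount⟩ :=
    key_induction (Nat.card (⊤ : Subgroup G)) ⊤ le_rfl
  refine ⟨L.length, fun i => (hcyc (L.get i) (L.get_mem i)).choose, t,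
    List.length_pos_iff.mpr hLne, ht, fun i => (hcyc (L.get i) (L.get_mem i)).choose_spec.1, ?_⟩
  intro g
  have hLeq : (List.ofFn fun i =>
      (((hcyc (L.get i) (L.get_mem i)).choose : Subgroup G) : Set G)) = L := by
    apply List.ext_get (by simp)
    intro i h1 h2
    rw [List.get_ofFn]
    exact ((hcyc (L.get ⟨i, h2⟩) (L.get_mem _)).choose_spec.2).symm
  rw [hLeq, hcount g, if_pos (Subgroup.mem_top g)]
end

section
/- Let G be a finite group and (H_1, …, H_k) a uniform group factorization of G with multiplicity t. Suppose that for each i ∈ {1, …, k} the subgroup H_i admits a uniform cyclic group factorization (H_{i,1}, …, H_{i,ℓ_i}) with multiplicity t_i. Then the concatenated tuple (H_{1,1}, …, H_{1,ℓ_1}, H_{2,1}, …, H_{2,ℓ_2}, …, H_{k,1}, …, H_{k,ℓ_k}), with each H_{i,j} regarded as a cyclic subgroup of G, is a uniform cyclic group factorization of G with multiplicity t · ∏_{i=1}^k t_i. -/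
section Aux
open scoped Classical
variable {G : Type*} [Group G]

theorem finite_aux [Finite G] {n : ℕ} {p : List G → Prop} (hp : ∀ h, p h → h.length = n) :
    Finite {h : List G // p h} := by
  haveI := Fintype.ofFinite G
  haveI : Finite {l : List G // l.length = n} := Finite.of_fintype (List.Vector G n)
  exact Finite.of_injective (β := {l : List G // l.length = n})
    (fun x => ⟨x.1, hp x.1 x.2⟩)
    (by
      intro a b hab
      have h2 := congrArg (fun v : {l : List G // l.length = n} => v.1) hab
      exact Subtype.ext h2)

instance multCountFinite [Finite G] (L : List (Set G)) (g : G) :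
    Finite {h : List G // List.Forall₂ (· ∈ ·) h L ∧ h.prod = g} :=
  finite_aux (n := L.length) fun _ hh => hh.1.length_eq

omit [Group G] in
theorem forall₂_cons_right_false {S : Set G} {L : List (Set G)}
    (hf : List.Forall₂ (· ∈ ·) ([] : List G) (S :: L)) : False := by
  cases hf

theorem multCount_nil (g : G) : multCount ([] : List (Set G)) g = if g = 1 then 1 else 0 := by
  unfold multCount
  by_cases hg : g = 1
  · subst hg
    rw [if_pos rfl]
    haveI : Unique {h : List G // List.Forall₂ (· ∈ ·) h ([] : List (Set G)) ∧ h.prod = 1} :=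
      { default := ⟨[], List.Forall₂.nil, rfl⟩
        uniq := by rintro ⟨h, hf, hp⟩; cases hf; rfl }
    exact Nat.card_unique
  · rw [if_neg hg]
    haveI : IsEmpty {h : List G // List.Forall₂ (· ∈ ·) h ([] : List (Set G)) ∧ h.prod = g} := by
      constructor; rintro ⟨h, hf, hp⟩; cases hf; exact hg hp.symm
    exact Nat.card_of_isEmpty

/-- The decomposition equivalence for a cons. -/
def consEquiv (S : Set G) (L : List (Set G)) (g : G) :
    {h : List G // List.Forall₂ (· ∈ ·) h (S :: L) ∧ h.prod = g} ≃
      Σ _a : G, {h : List G // _a ∈ S ∧ (List.Forall₂ (· ∈ ·) h L ∧ h.prod = _a⁻¹ * g)} where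
  toFun := fun x =>
    match x with
    | ⟨[], hx⟩ => absurd hx.1 (fun hf => forall₂_cons_right_false hf)
    | ⟨a :: h, hx⟩ =>
        ⟨a, h, (List.forall₂_cons.mp hx.1).1, (List.forall₂_cons.mp hx.1).2, by
          have hp := hx.2
          rw [List.prod_cons] at hp
          rw [← hp, inv_mul_cancel_left]⟩
  invFun := fun x =>
    ⟨x.1 :: x.2.1, List.forall₂_cons.mpr ⟨x.2.2.1, x.2.2.2.1⟩, by
      rw [List.prod_cons, x.2.2.2.2, mul_inv_cancel_left]⟩
  left_inv := by
    rintro ⟨_ | ⟨a, h⟩, hf, hp⟩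
    · exact absurd hf (fun hf => forall₂_cons_right_false hf)
    · rfl
  right_inv := by rintro ⟨a, h, ha, hf, hp⟩; rfl

theorem multCount_cons [Fintype G] (S : Set G) (L : List (Set G)) (g : G) :
    multCount (S :: L) g = ∑ a : G, if a ∈ S then multCount L (a⁻¹ * g) else 0 := by
  haveI : ∀ a : G,
      Finite {h : List G // a ∈ S ∧ (List.Forall₂ (· ∈ ·) h L ∧ h.prod = a⁻¹ * g)} :=
    fun a => finite_aux (n := L.length) fun _ hh => hh.2.1.length_eq
  haveI : ∀ a : G,
      Fintype {h : List G // a ∈ S ∧ (List.Forall₂ (· ∈ ·) h L ∧ h.prod = a⁻¹ * g)} :=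
    fun a => Fintype.ofFinite _
  rw [multCount, Nat.card_congr (consEquiv S L g), Nat.card_eq_fintype_card,
    Fintype.card_sigma]
  refine Finset.sum_congr rfl fun a _ => ?_
  by_cases ha : a ∈ S
  · rw [if_pos ha, multCount, ← Nat.card_eq_fintype_card]
    exact Nat.card_congr (Equiv.subtypeEquivRight fun h => and_iff_right ha)
  · rw [if_neg ha, Fintype.card_eq_zero_iff]
    exact ⟨fun x => ha x.2.1⟩

theorem multCount_append [Fintype G] (L₁ L₂ : List (Set G)) (g : G) :
    multCount (L₁ ++ L₂) g = ∑ a : G, multCount L₁ a * multCount L₂ (a⁻¹ * g) := by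
  induction L₁ generalizing g with
  | nil =>
      simp only [List.nil_append, multCount_nil, ite_mul, one_mul, zero_mul]
      rw [Finset.sum_ite_eq' Finset.univ (1 : G) fun a => multCount L₂ (a⁻¹ * g)]
      simp
  | cons S L ih =>
      rw [List.cons_append, multCount_cons]
      have h1 : ∀ a : G, (if a ∈ S then multCount (L ++ L₂) (a⁻¹ * g) else 0)
          = ∑ b : G, (if a ∈ S then multCount L (a⁻¹ * b) else 0) * multCount L₂ (b⁻¹ * g) := by
        intro a
        by_cases ha : a ∈ S
        · simp only [if_pos ha, ih]
          refine Fintype.sum_equiv (Equiv.mulLeft a) _ _ fun b => ?_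
          simp [mul_assoc, Equiv.mulLeft]
        · simp [if_neg ha]
      rw [Finset.sum_congr rfl fun a _ => h1 a, Finset.sum_comm]
      refine Finset.sum_congr rfl fun b _ => ?_
      rw [multCount_cons, Finset.sum_mul]

end Aux

section Aux2
open scoped Classical
variable {G : Type*} [Group G]

theorem prod_mem_of_forall₂ (A : Subgroup G) {h : List G} {L : List (Set G)}
    (hf : List.Forall₂ (· ∈ ·) h L) (hL : ∀ S ∈ L, S ⊆ (A : Set G)) : h.prod ∈ A := by
  induction hf with
  | nil => simpa using A.one_mem
  | @cons a S h L ha hf ih =>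
      rw [List.prod_cons]
      exact A.mul_mem (hL S (List.mem_cons_self) ha)
        (ih fun T hT => hL T (List.mem_cons_of_mem _ hT))

theorem multCount_eq_zero (A : Subgroup G) {L : List (Set G)}
    (hL : ∀ S ∈ L, S ⊆ (A : Set G)) {g : G} (hg : g ∉ A) : multCount L g = 0 := by
  haveI : IsEmpty {h : List G // List.Forall₂ (· ∈ ·) h L ∧ h.prod = g} := by
    constructor
    rintro ⟨h, hf, hp⟩
    exact hg (hp ▸ prod_mem_of_forall₂ A hf hL)
  exact Nat.card_of_isEmpty

theorem exists_list_preimage {H : Type*} [Group H] (f : H →* G) :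
    ∀ {L : List (Set H)} {l : List G},
      List.Forall₂ (· ∈ ·) l (L.map (Set.image f)) →
      ∃ m : List H, List.Forall₂ (· ∈ ·) m L ∧ m.map f = l := by
  intro L
  induction L with
  | nil =>
      intro l hl
      rw [List.map_nil, List.forall₂_nil_right_iff] at hl
      exact ⟨[], List.Forall₂.nil, by simp [hl]⟩
  | cons S L ih =>
      intro l hl
      rw [List.map_cons] at hl
      rcases l with _ | ⟨a, l⟩
      · cases hl
      · rw [List.forall₂_cons] at hl
        obtain ⟨⟨x, hxS, rfl⟩, hl'⟩ := hl
        obtain ⟨m, hm, rfl⟩ := ih hl'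
        exact ⟨x :: m, List.forall₂_cons.mpr ⟨hxS, hm⟩, rfl⟩

theorem multCount_map {H : Type*} [Group H] (f : H →* G) (hf : Function.Injective f)
    (L : List (Set H)) (h : H) :
    multCount (L.map (Set.image f)) (f h) = multCount L h := by
  refine (Nat.card_congr (Equiv.ofBijective
    (f := fun (m : {m : List H // List.Forall₂ (· ∈ ·) m L ∧ m.prod = h}) =>
      (⟨m.1.map f, ?_, ?_⟩ :
        {l : List G // List.Forall₂ (· ∈ ·) l (L.map (Set.image f)) ∧ l.prod = f h}))
    ⟨?_, ?_⟩)).symm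
  · rw [List.forall₂_map_right_iff, List.forall₂_map_left_iff]
    exact List.Forall₂.imp (fun a S' ha => Set.mem_image_of_mem f ha) m.2.1
  · rw [List.prod_hom m.1 f, m.2.2]
  · intro a b hab
    have h2 := congrArg (fun v : {l : List G // List.Forall₂ (· ∈ ·) l (L.map (Set.image f)) ∧ l.prod = f h} => v.1) hab
    exact Subtype.ext (List.map_injective_iff.mpr hf h2)
  · rintro ⟨l, hfl, hpl⟩
    obtain ⟨m, hm, rfl⟩ := exists_list_preimage f hfl
    have hprod : m.prod = h := by
      apply hf
      rw [← List.prod_hom m f]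
      exact hpl
    exact ⟨⟨m, hm, hprod⟩, rfl⟩

end Aux2

section Aux3
open scoped Classical
variable {G : Type*} [Group G]

theorem multCount_flatten_blocks [Fintype G] :
    ∀ (P : List (List (Set G) × Set G × ℕ)),
      (∀ p ∈ P, ∀ g : G, multCount p.1 g = if g ∈ p.2.1 then p.2.2 else 0) →
      ∀ g : G, multCount (P.map Prod.fst).flatten g
        = (P.map fun p => p.2.2).prod * multCount (P.map fun p => p.2.1) g := by
  intro P
  induction P with
  | nil => intro _ g; simp
  | cons p P ih =>
      intro hP g
      have hp := hP p (List.mem_cons_self)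
      have hR := ih (fun q hq => hP q (List.mem_cons_of_mem _ hq))
      simp only [List.map_cons, List.flatten_cons, List.prod_cons]
      rw [multCount_append, multCount_cons, Finset.mul_sum]
      refine Finset.sum_congr rfl fun a _ => ?_
      rw [hp a, hR (a⁻¹ * g)]
      by_cases ha : a ∈ p.2.1
      · rw [if_pos ha, if_pos ha]; ring
      · rw [if_neg ha, if_neg ha]; ring

end Aux3

/-- If `(H 1, …, H k)` is a uniform group factorization of `G` with multiplicity `t` and
each `H i` admits a uniform cyclic group factorization `(Hij i 1, …, Hij i (ℓ i))` with
multiplicity `ti i`, then the concatenated tuple of the `Hij i j` (regarded as cyclic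
subgroups of `G`) is a uniform cyclic group factorization of `G` with multiplicity
`t * ∏ i, ti i`. -/
theorem uniform_cyclic_group_factorization_concat
    {G : Type*} [Group G] [Finite G] {k : ℕ} (hk : 1 ≤ k)
    (H : Fin k → Subgroup G) (t : ℕ) (ht : 0 < t)
    (hH : ∀ g : G, multCount (List.ofFn fun i => (H i : Set G)) g = t)
    (ℓ : Fin k → ℕ) (hℓ : ∀ i, 1 ≤ ℓ i)
    (Hij : (i : Fin k) → Fin (ℓ i) → Subgroup (H i))
    (hcyc : ∀ i j, IsCyclic (Hij i j))
    (ti : Fin k → ℕ) (hti : ∀ i, 0 < ti i)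
    (hHij : ∀ (i : Fin k) (h : H i),
      multCount (List.ofFn fun j => (Hij i j : Set (H i))) h = ti i) :
    (∀ (i : Fin k) (j : Fin (ℓ i)), IsCyclic ((Hij i j).map (H i).subtype)) ∧
    ∀ g : G,
      multCount
        ((List.ofFn fun i =>
          List.ofFn fun j => (((Hij i j).map (H i).subtype : Subgroup G) : Set G)).flatten) g
        = t * ∏ i, ti i := by
  classical
  haveI := Fintype.ofFinite G
  constructor
  · intro i j
    haveI := hcyc i j
    exact isCyclic_of_surjective _
      ((Subgroup.equivMapOfInjective (Hij i j) (H i).subtype (H i).subtype_injective).surjective)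
  · intro g
    set P : List (List (Set G) × Set G × ℕ) := List.ofFn (fun i =>
      ((List.ofFn fun j => (((Hij i j).map (H i).subtype : Subgroup G) : Set G)),
        ((H i : Set G), ti i))) with hP
    have hblocks : ∀ p ∈ P, ∀ g : G, multCount p.1 g = if g ∈ p.2.1 then p.2.2 else 0 := by
      intro p hp g
      rw [hP, List.mem_ofFn] at hp
      obtain ⟨i, rfl⟩ := hp
      show multCount (List.ofFn fun j => (((Hij i j).map (H i).subtype : Subgroup G) : Set G)) g
        = if g ∈ (H i : Set G) then ti i else 0
      have hlist : (List.ofFn fun j => (((Hij i j).map (H i).subtype : Subgroup G) : Set G))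
          = (List.ofFn fun j => ((Hij i j : Set (H i)))).map (Set.image ((H i).subtype)) := by
        simp only [List.map_ofFn, Function.comp_def, Subgroup.coe_map]
      rw [hlist]
      by_cases hg : g ∈ H i
      · rw [if_pos (show g ∈ (H i : Set G) from hg)]
        have hgg : g = (H i).subtype ⟨g, hg⟩ := rfl
        rw [hgg, multCount_map _ (H i).subtype_injective]
        exact hHij i ⟨g, hg⟩
      · rw [if_neg (show g ∉ (H i : Set G) from hg)]
        refine multCount_eq_zero (H i) ?_ hg
        intro S hS
        rw [List.mem_map] at hS
        obtain ⟨T, hT, rfl⟩ := hS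
        refine (Set.image_subset_range _ _).trans ?_
        rw [Subgroup.coe_subtype, Subtype.range_coe]
    have key := multCount_flatten_blocks P hblocks g
    have e1 : P.map Prod.fst = List.ofFn (fun i =>
        List.ofFn fun j => (((Hij i j).map (H i).subtype : Subgroup G) : Set G)) := by
      rw [hP, List.map_ofFn]; rfl
    have e2 : (P.map fun p => p.2.2) = List.ofFn ti := by rw [hP, List.map_ofFn]; rfl
    have e3 : (P.map fun p => p.2.1) = List.ofFn (fun i => (H i : Set G)) := by
      rw [hP, List.map_ofFn]; rfl
    rw [e1, e2, e3] at key
    rw [key, hH g, List.prod_ofFn, mul_comm]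
end

section
/- Let G and G' be finite groups, f : G → G' a group homomorphism, and H_1, …, H_k subgroups of G. For each i set t_i := |ker(f) ∩ H_i|. If the tuple of image subgroups (f(H_1), f(H_2), …, f(H_k)) is a uniform group factorization of G' with multiplicity t', then the tuple (H_1, H_2, …, H_k, ker(f)) is a uniform group factorization of G with multiplicity t' · ∏_{i=1}^k t_i. -/
open List in
private lemma forall₂_ofFn_of_forall {α β : Type*} {R : α → β → Prop} {n : ℕ}
    {a : Fin n → α} {b : Fin n → β} (h : ∀ i, R (a i) (b i)) :
    List.Forall₂ R (List.ofFn a) (List.ofFn b) := by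
  apply List.forall₂_of_length_eq_of_get (by simp)
  intro i h1 h2
  simpa using h _

private lemma exists_pi_of_forall₂ {M : Type*} {n : ℕ} {S : Fin n → Set M} {h : List M}
    (hf : List.Forall₂ (· ∈ ·) h (List.ofFn S)) :
    ∃ y : ∀ i, S i, (List.ofFn fun i => (y i : M)) = h := by
  have hl : h.length = n := hf.length_eq.trans (by simp)
  have hg := (List.forall₂_iff_get.mp hf).2
  refine ⟨fun i => ⟨h.get (Fin.cast hl.symm i), ?_⟩, ?_⟩
  · have := hg (i : ℕ) (by omega) (by simp)
    simpa using this
  · apply List.ext_get (by simp [hl])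
    intro i h1 h2
    simp

private noncomputable def listPiEquiv {M : Type*} [Monoid M] {n : ℕ} (S : Fin n → Set M)
    (g : M) :
    {y : ∀ i, S i // (List.ofFn fun i => (y i : M)).prod = g} ≃
    {h : List M // List.Forall₂ (· ∈ ·) h (List.ofFn S) ∧ h.prod = g} :=
  Equiv.ofBijective
    (fun y => ⟨List.ofFn fun i => (y.1 i : M),
      forall₂_ofFn_of_forall (fun i => (y.1 i).2), y.2⟩)
    (by
      constructor
      · rintro ⟨y₁, h₁⟩ ⟨y₂, h₂⟩ h
        have h' : (List.ofFn fun i => (y₁ i : M)) = List.ofFn fun i => (y₂ i : M) :=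
          congrArg Subtype.val h
        have := List.ofFn_inj.mp h'
        exact Subtype.ext (funext fun i => Subtype.ext (congrFun this i))
      · rintro ⟨h, hf, hp⟩
        obtain ⟨y, hy⟩ := exists_pi_of_forall₂ hf
        exact ⟨⟨y, by rw [hy, hp]⟩, Subtype.ext hy⟩)

private lemma multCount_ofFn {M : Type*} [Group M] {n : ℕ} (S : Fin n → Set M) (g : M) :
    multCount (List.ofFn S) g
      = Nat.card {y : ∀ i, S i // (List.ofFn fun i => (y i : M)).prod = g} :=
  (Nat.card_congr (listPiEquiv S g)).symm

/-- If `f : G →* G'` is a homomorphism, `H 1, …, H k` are subgroups of `G`, and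
`(f(H 1), …, f(H k))` is a uniform group factorization of `G'` with multiplicity `t'`,
then `(H 1, …, H k, ker f)` is a uniform group factorization of `G` with multiplicity
`t' * ∏ i, |ker f ∩ H i|`. -/
theorem uniform_group_factorization_of_hom
    {G G' : Type*} [Group G] [Finite G] [Group G'] [Finite G']
    (f : G →* G') {k : ℕ} (hk : 1 ≤ k) (H : Fin k → Subgroup G)
    (t' : ℕ) (ht' : 0 < t')
    (hH : ∀ g' : G',
      multCount (List.ofFn fun i => (((H i).map f : Subgroup G') : Set G')) g' = t') :
    ∀ g : G,
      multCount ((List.ofFn fun i => (H i : Set G)) ++ [(f.ker : Set G)]) g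
        = t' * ∏ i, Nat.card (f.ker ⊓ H i : Subgroup G) := by
  intro g
  classical
  -- the target type of the image factorization
  set T := {y : ∀ i, (((H i).map f : Subgroup G') : Set G') //
      (List.ofFn fun i => (y i : G')).prod = f g} with hTdef
  have hT : Nat.card T = t' := (multCount_ofFn _ (f g)).symm.trans (hH (f g))
  -- the intermediate types
  set C' := {p : (∀ i, ((H i : Set G))) × f.ker //
      (List.ofFn fun i => (p.1 i : G)).prod * (p.2 : G) = g} with hC'def
  set C := {y : ∀ i, ((H i : Set G)) //
      f ((List.ofFn fun i => (y i : G)).prod) = f g} with hCdef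
  -- Step 1: the list subtype is equivalent to C'
  have e1 : C' ≃ {h : List G //
      List.Forall₂ (· ∈ ·) h ((List.ofFn fun i => (H i : Set G)) ++ [(f.ker : Set G)])
        ∧ h.prod = g} := by
    refine Equiv.ofBijective (fun p => ⟨(List.ofFn fun i => (p.1.1 i : G)) ++ [(p.1.2 : G)],
      ?_, ?_⟩) ⟨?_, ?_⟩
    · exact List.rel_append
        (forall₂_ofFn_of_forall (R := fun x1 x2 => x1 ∈ x2) fun i => (p.1.1 i).2)
        ((List.forall₂_cons.mpr ⟨p.1.2.2, List.Forall₂.nil⟩))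
    · simpa using p.2
    · rintro ⟨⟨y₁, z₁⟩, h₁⟩ ⟨⟨y₂, z₂⟩, h₂⟩ h
      have hl : (List.ofFn fun i => (y₁ i : G)) ++ [(z₁ : G)]
          = (List.ofFn fun i => (y₂ i : G)) ++ [(z₂ : G)] := congrArg Subtype.val h
      obtain ⟨ht, hz'⟩ := List.append_inj hl (by simp)
      have hz : (z₁ : G) = (z₂ : G) := by simpa using hz'
      have hy : y₁ = y₂ := funext fun i => Subtype.ext (congrFun (List.ofFn_inj.mp ht) i)
      exact Subtype.ext (Prod.ext hy (Subtype.ext hz))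
    · rintro ⟨h, hf, hp⟩
      have hf1 := List.forall₂_take_append h _ _ hf
      have hf2 := List.forall₂_drop_append h _ _ hf
      simp only [List.length_ofFn] at hf1 hf2
      obtain ⟨z, l', hz, hl', hdrop⟩ := List.forall₂_cons_right_iff.mp hf2
      rw [List.forall₂_nil_right_iff.mp hl'] at hdrop
      obtain ⟨y, hy⟩ := exists_pi_of_forall₂ hf1
      refine ⟨⟨⟨y, ⟨z, hz⟩⟩, ?_⟩, ?_⟩
      · show (List.ofFn fun i => (y i : G)).prod * z = g
        rw [hy, ← hp]
        conv_rhs => rw [← List.take_append_drop k h]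
        rw [hdrop]
        simp
      · apply Subtype.ext
        show (List.ofFn fun i => (y i : G)) ++ [z] = h
        rw [hy, ← hdrop, List.take_append_drop]
  -- Step 2: C' ≃ C
  have e2 : C' ≃ C := by
    refine ⟨fun p => ⟨p.1.1, ?_⟩,
      fun y => ⟨⟨y.1, ⟨((List.ofFn fun i => (y.1 i : G)).prod)⁻¹ * g, ?_⟩⟩, ?_⟩, ?_, ?_⟩
    · have hz : f (p.1.2 : G) = 1 := MonoidHom.mem_ker.mp p.1.2.2
      have := congrArg f p.2
      rw [map_mul, hz, mul_one] at this
      exact this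
    · rw [MonoidHom.mem_ker, map_mul, map_inv, y.2, inv_mul_cancel]
    · show (List.ofFn fun i => (y.1 i : G)).prod * (_ * g) = g
      rw [mul_inv_cancel_left]
    · rintro ⟨⟨y, z⟩, hp⟩
      refine Subtype.ext (Prod.ext rfl (Subtype.ext ?_))
      show ((List.ofFn fun i => (y i : G)).prod)⁻¹ * g = (z : G)
      rw [← hp, inv_mul_cancel_left]
    · intro y; rfl
  -- Step 3: the fibration over T
  have hπmem : ∀ (y : C) (i : Fin k), f (y.1 i : G) ∈ (H i).map f :=
    fun y i => Subgroup.mem_map_of_mem f (y.1 i).2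
  set π : C → T := fun y => ⟨fun i => ⟨f (y.1 i : G), hπmem y i⟩, by
    show (List.ofFn fun i => f (y.1 i : G)).prod = f g
    rw [show (List.ofFn fun i => f (y.1 i : G))
        = (List.ofFn fun i => (y.1 i : G)).map f by simp [List.map_ofFn, Function.comp_def],
      ← map_list_prod, y.2]⟩ with hπdef
  have hsec : ∀ (w : T) (i : Fin k), ∃ x : ((H i : Set G)), f (x : G) = (w.1 i : G') := by
    intro w i
    obtain ⟨x, hx, hfx⟩ := Subgroup.mem_map.mp (w.1 i).2
    exact ⟨⟨x, hx⟩, hfx⟩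
  choose y₀ hy₀ using hsec
  have fiberEquiv : ∀ w : T, {y : C // π y = w} ≃ ∀ i, (f.ker ⊓ H i : Subgroup G) := by
    intro w
    have hval : ∀ (y : {y : C // π y = w}) (i : Fin k), f (y.1.1 i : G) = (w.1 i : G') := by
      intro y i
      exact congrArg (fun t => (t.1 i : G')) y.2
    refine ⟨fun y i => ⟨(y.1.1 i : G) * (y₀ w i : G)⁻¹, ?_⟩,
      fun u => ⟨⟨fun i => ⟨(u i : G) * (y₀ w i : G),
        mul_mem ((Subgroup.mem_inf.mp (u i).2).2) (y₀ w i).2⟩, ?_⟩, ?_⟩, ?_, ?_⟩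
    · refine Subgroup.mem_inf.mpr ⟨?_, mul_mem (y.1.1 i).2 (inv_mem (y₀ w i).2)⟩
      rw [MonoidHom.mem_ker, map_mul, map_inv, hval y i, hy₀ w i, mul_inv_cancel]
    · -- C condition
      have key : ∀ i, f ((u i : G) * (y₀ w i : G)) = (w.1 i : G') := by
        intro i
        rw [map_mul, MonoidHom.mem_ker.mp (Subgroup.mem_inf.mp (u i).2).1, one_mul, hy₀]
      show f ((List.ofFn fun i => (u i : G) * (y₀ w i : G)).prod) = f g
      rw [map_list_prod, List.map_ofFn]
      rw [show (List.ofFn (f ∘ fun i => (u i : G) * (y₀ w i : G)))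
          = List.ofFn fun i => (w.1 i : G') from List.ofFn_inj.mpr (funext fun i => key i)]
      exact w.2
    · -- π condition
      have key : ∀ i, f ((u i : G) * (y₀ w i : G)) = (w.1 i : G') := by
        intro i
        rw [map_mul, MonoidHom.mem_ker.mp (Subgroup.mem_inf.mp (u i).2).1, one_mul, hy₀]
      exact Subtype.ext (funext fun i => Subtype.ext (key i))
    · intro y
      exact Subtype.ext (Subtype.ext (funext fun i => Subtype.ext (inv_mul_cancel_right _ _)))
    · intro u
      exact funext fun i => Subtype.ext (mul_inv_cancel_right _ _)
  -- putting everything together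
  calc multCount ((List.ofFn fun i => (H i : Set G)) ++ [(f.ker : Set G)]) g
      = Nat.card C' := (Nat.card_congr e1).symm
    _ = Nat.card C := Nat.card_congr e2
    _ = Nat.card (Σ w : T, {y : C // π y = w}) :=
        Nat.card_congr (Equiv.sigmaFiberEquiv π).symm
    _ = Nat.card (T × ∀ i, (f.ker ⊓ H i : Subgroup G)) :=
        Nat.card_congr ((Equiv.sigmaCongrRight fiberEquiv).trans (Equiv.sigmaEquivProd _ _))
    _ = t' * ∏ i, Nat.card (f.ker ⊓ H i : Subgroup G) := by
        rw [Nat.card_prod, hT, Nat.card_pi]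
end

section
/- Let G be a nontrivial finite cyclic group. Then G admits a proper uniform group factorization (i.e., a uniform group factorization in which every factor is a proper subgroup of G) if and only if the order of G is not a prime power. Moreover, when |G| is not a prime power, G admits a proper uniform cyclic group factorization with multiplicity one. -/
private lemma listProdPow {M : Type*} [CommMonoid M] {N : ℕ} :
    ∀ {l : List M} {L : List (Set M)}, List.Forall₂ (· ∈ ·) l L →
      (∀ S ∈ L, ∀ x ∈ S, x ^ N = 1) → l.prod ^ N = 1 := by
  intro l L h
  induction h with
  | nil => intro _; simp
  | cons hx _ ih =>
    intro hall
    rw [List.prod_cons, mul_pow, hall _ List.mem_cons_self _ hx,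
      ih (fun S hS => hall S (List.mem_cons_of_mem _ hS)), one_mul]

private lemma multCount_pair {G : Type*} [Group G] (H₁ H₂ : Subgroup G)
    (hbij : Function.Bijective (fun p : H₁ × H₂ => (p.1 : G) * p.2)) (g : G) :
    multCount [(H₁ : Set G), (H₂ : Set G)] g = 1 := by
  rw [multCount, Nat.card_eq_one_iff_unique]
  constructor
  · constructor
    rintro ⟨l₁, m₁, p₁⟩ ⟨l₂, m₂, p₂⟩
    rw [List.forall₂_cons_right_iff] at m₁ m₂
    obtain ⟨x₁, l₁', hx₁, m₁', rfl⟩ := m₁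
    obtain ⟨x₂, l₂', hx₂, m₂', rfl⟩ := m₂
    rw [List.forall₂_cons_right_iff] at m₁' m₂'
    obtain ⟨y₁, l₁'', hy₁, m₁'', rfl⟩ := m₁'
    obtain ⟨y₂, l₂'', hy₂, m₂'', rfl⟩ := m₂'
    rw [List.forall₂_nil_right_iff] at m₁'' m₂''
    subst m₁''; subst m₂''
    simp only [List.prod_cons, List.prod_nil, mul_one] at p₁ p₂
    have := hbij.1 (a₁ := (⟨x₁, hx₁⟩, ⟨y₁, hy₁⟩)) (a₂ := (⟨x₂, hx₂⟩, ⟨y₂, hy₂⟩))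
      (by simp only []; rw [p₁, p₂])
    have h1 : x₁ = x₂ := congrArg (fun p => ((Prod.fst p : H₁) : G)) this
    have h2 : y₁ = y₂ := congrArg (fun p => ((Prod.snd p : H₂) : G)) this
    simp [h1, h2]
  · obtain ⟨⟨x, y⟩, hxy⟩ := hbij.2 g
    exact ⟨⟨[(x : G), (y : G)],
      List.Forall₂.cons x.2 (List.Forall₂.cons y.2 List.Forall₂.nil),
      by simpa using hxy⟩⟩

private lemma construction {G : Type*} [Group G] [Finite G] [IsCyclic G]
    (hG : Nat.card G ≠ 1) (hnp : ¬ ∃ p r : ℕ, p.Prime ∧ Nat.card G = p ^ r) :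
    ∃ (k : ℕ) (H : Fin k → Subgroup G),
      1 ≤ k ∧ (∀ i, H i ≠ ⊤) ∧ (∀ i, IsCyclic (H i)) ∧
      ∀ g : G, multCount (List.ofFn fun i => (H i : Set G)) g = 1 := by
  set n := Nat.card G with hn
  have hn0 : n ≠ 0 := Nat.card_pos.ne'
  have hn2 : 2 ≤ n := by omega
  obtain ⟨p, hp, hpn⟩ := Nat.exists_prime_and_dvd (by omega : n ≠ 1)
  set a := p ^ n.factorization p with ha
  set b := n / a with hb
  have hab : a * b = n := Nat.ordProj_mul_ordCompl_eq_self n p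
  have hcop : Nat.Coprime a b := Nat.Coprime.pow_left _ (Nat.coprime_ordCompl hp hn0)
  have ha1 : 1 < a := by
    have hpos := Nat.Prime.factorization_pos_of_dvd hp hn0 hpn
    calc 1 < p := hp.one_lt
    _ ≤ p ^ n.factorization p := Nat.le_self_pow hpos.ne' p
  have hb1 : 1 < b := by
    by_contra h
    have hb0 : b ≠ 0 := fun h0 => hn0 (by rw [← hab, h0, mul_zero])
    have hbone : b = 1 := le_antisymm (not_lt.mp h) (Nat.one_le_iff_ne_zero.mpr hb0)
    refine hnp ⟨p, n.factorization p, hp, ?_⟩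
    have := hab
    rw [hbone, mul_one, ha] at this
    exact this.symm
  obtain ⟨g, hg⟩ := IsCyclic.exists_generator (α := G)
  have horder : orderOf g = n := orderOf_eq_card_of_forall_mem_zpowers hg
  have hord0 : orderOf g ≠ 0 := by rw [horder]; exact hn0
  have hadvd : a ∣ orderOf g := by rw [horder]; exact ⟨b, hab.symm⟩
  have hbdvd : b ∣ orderOf g := by rw [horder, ← hab, mul_comm]; exact ⟨a, rfl⟩
  set H₁ : Subgroup G := Subgroup.zpowers (g ^ (orderOf g / a)) with hH₁
  set H₂ : Subgroup G := Subgroup.zpowers (g ^ (orderOf g / b)) with hH₂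
  have hcard₁ : Nat.card H₁ = a := by
    rw [hH₁, Nat.card_zpowers, orderOf_pow_orderOf_div hord0 hadvd]
  have hcard₂ : Nat.card H₂ = b := by
    rw [hH₂, Nat.card_zpowers, orderOf_pow_orderOf_div hord0 hbdvd]
  have hlt₁ : a < n := by
    conv_rhs => rw [← hab]
    exact (lt_mul_iff_one_lt_right (by omega)).mpr hb1
  have hlt₂ : b < n := by
    conv_rhs => rw [← hab]
    exact (lt_mul_iff_one_lt_left (by omega)).mpr ha1
  have hne₁ : H₁ ≠ ⊤ := by
    intro h
    have := hcard₁
    rw [h, Subgroup.card_top, ← hn] at this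
    omega
  have hne₂ : H₂ ≠ ⊤ := by
    intro h
    have := hcard₂
    rw [h, Subgroup.card_top, ← hn] at this
    omega
  have hinf : H₁ ⊓ H₂ = ⊥ := by
    rw [← Subgroup.card_eq_one]
    have d1 : Nat.card (H₁ ⊓ H₂ : Subgroup G) ∣ a :=
      hcard₁ ▸ Subgroup.card_dvd_of_le inf_le_left
    have d2 : Nat.card (H₁ ⊓ H₂ : Subgroup G) ∣ b :=
      hcard₂ ▸ Subgroup.card_dvd_of_le inf_le_right
    have := Nat.dvd_gcd d1 d2
    rw [Nat.Coprime.gcd_eq_one hcop] at this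
    exact Nat.dvd_one.mp this
  have hbij : Function.Bijective (fun q : H₁ × H₂ => (q.1 : G) * q.2) := by
    rw [Nat.bijective_iff_injective_and_card]
    constructor
    · rintro ⟨x, y⟩ ⟨x', y'⟩ hxy
      simp only at hxy
      have h' : (x' : G)⁻¹ * x = (y' : G) * (y : G)⁻¹ := by
        rw [inv_mul_eq_iff_eq_mul, ← mul_assoc, ← hxy, mul_assoc, mul_inv_cancel, mul_one]
      have hmem : ((x' : G)⁻¹ * x) ∈ H₁ ⊓ H₂ := by
        refine ⟨H₁.mul_mem (H₁.inv_mem x'.2) x.2, ?_⟩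
        rw [h']
        exact H₂.mul_mem y'.2 (H₂.inv_mem y.2)
      rw [hinf, Subgroup.mem_bot] at hmem
      have hx : (x : G) = x' := by
        rw [inv_mul_eq_iff_eq_mul] at hmem
        rw [hmem, mul_one]
      have hy : (y : G) = y' := by
        have := hxy
        rw [hx] at this
        exact mul_left_cancel this
      exact Prod.ext (Subtype.ext hx) (Subtype.ext hy)
    · rw [Nat.card_prod, hcard₁, hcard₂, hab, hn]
  refine ⟨2, ![H₁, H₂], by omega, ?_, ?_, ?_⟩
  · intro i
    fin_cases i
    · exact hne₁
    · exact hne₂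
  · intro i
    fin_cases i <;> dsimp <;> exact Subgroup.isCyclic _
  · intro x
    have hofn : (List.ofFn fun i => ((![H₁, H₂] i : Subgroup G) : Set G))
        = [(H₁ : Set G), (H₂ : Set G)] := by
      simp [List.ofFn_succ]
    rw [hofn]
    exact multCount_pair H₁ H₂ hbij x

/-- A nontrivial finite cyclic group admits a proper uniform group factorization iff its
order is not a prime power; and in that case it admits a proper uniform cyclic group
factorization with multiplicity one. -/
theorem cyclic_proper_uniform_group_factorization_iff
    (G : Type*) [Group G] [Finite G] [IsCyclic G] (hG : Nat.card G ≠ 1) :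
    ((∃ (k : ℕ) (H : Fin k → Subgroup G) (t : ℕ),
        1 ≤ k ∧ 0 < t ∧ (∀ i, H i ≠ ⊤) ∧
        ∀ g : G, multCount (List.ofFn fun i => (H i : Set G)) g = t) ↔
      ¬ ∃ p r : ℕ, p.Prime ∧ Nat.card G = p ^ r) ∧
    ((¬ ∃ p r : ℕ, p.Prime ∧ Nat.card G = p ^ r) →
      ∃ (k : ℕ) (H : Fin k → Subgroup G),
        1 ≤ k ∧ (∀ i, H i ≠ ⊤) ∧ (∀ i, IsCyclic (H i)) ∧
        ∀ g : G, multCount (List.ofFn fun i => (H i : Set G)) g = 1) := by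
  constructor
  · constructor
    · rintro ⟨k, H, t, hk, ht, hH, huni⟩ ⟨p, r, hp, hcard⟩
      have hr : 1 ≤ r := by
        by_contra h
        have : r = 0 := by omega
        rw [this, pow_zero] at hcard
        exact hG hcard
      obtain ⟨g, hg⟩ := IsCyclic.exists_generator (α := G)
      have horder : orderOf g = p ^ r := hcard ▸ orderOf_eq_card_of_forall_mem_zpowers hg
      have hcount := huni g
      have hpos : 0 < multCount (List.ofFn fun i => (H i : Set G)) g := by omega
      rw [multCount] at hpos
      obtain ⟨⟨l, hmem, hprod⟩⟩ := (Nat.card_pos_iff.mp hpos).1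
      letI : CommGroup G := IsCyclic.commGroup
      have key : g ^ (p ^ (r - 1)) = 1 := by
        rw [← hprod]
        refine listProdPow hmem ?_
        intro S hS x hx
        rw [List.mem_ofFn] at hS
        obtain ⟨i, rfl⟩ := hS
        have hx' : x ∈ H i := hx
        have hdvd : orderOf x ∣ p ^ r := hcard ▸ orderOf_dvd_natCard x
        obtain ⟨s, hs, hxs⟩ := (Nat.dvd_prime_pow hp).mp hdvd
        have hslt : s < r := by
          by_contra h
          have hsr : s = r := by omega
          have hcc : Nat.card (Subgroup.zpowers x) = Nat.card G := by
            rw [Nat.card_zpowers, hxs, hsr, hcard]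
          have htop := Subgroup.eq_top_of_card_eq _ hcc
          exact hH i (top_le_iff.mp (htop ▸ Subgroup.zpowers_le.mpr hx'))
        have hdvd' : orderOf x ∣ p ^ (r - 1) := hxs ▸ pow_dvd_pow p (by omega)
        exact orderOf_dvd_iff_pow_eq_one.mp hdvd'
      have hdd : p ^ r ∣ p ^ (r - 1) := horder ▸ orderOf_dvd_iff_pow_eq_one.mpr key
      have hle := Nat.le_of_dvd (Nat.pow_pos hp.pos) hdd
      have := Nat.pow_lt_pow_right hp.one_lt (by omega : r - 1 < r)
      omega
    · intro hnp
      obtain ⟨k, H, hk, hne, _, huni⟩ := construction hG hnp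
      exact ⟨k, H, 1, hk, one_pos, hne, huni⟩
  · exact construction hG
end

section
/- Let m ≥ 3 and n = 2m. In the alternating group A_n, set σ_1 = (1, 2, …, m)(m+1, m+2, …, 2m) (the product of the two disjoint m-cycles), σ_2 = (1, 2)(m, 2m) (the product of two disjoint transpositions), K_1 = ⟨σ_1⟩, K_2 = ⟨σ_2⟩, and let H = Stab_{A_n}(n) be the stabilizer of the point n in A_n. Then (K_1, K_2, H) is a uniform group factorization of A_n with multiplicity 1; that is, every ρ ∈ A_n has a unique expression ρ = k_1 k_2 h with k_1 ∈ K_1, k_2 ∈ K_2, h ∈ H. -/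
private lemma step_mod (m x : ℕ) (hm : 0 < m) :
    (x + 1) % m = if x % m = m - 1 then 0 else x % m + 1 := by
  have hx := Nat.mod_lt x hm
  rcases Nat.lt_or_ge (x % m + 1) m with h | h
  · rw [if_neg (by omega)]
    conv_lhs => rw [← Nat.mod_add_div x m]
    rw [Nat.add_right_comm, Nat.add_mul_mod_self_left, Nat.mod_eq_of_lt h]
  · rw [if_pos (by omega)]
    conv_lhs => rw [← Nat.mod_add_div x m]
    have h2 : x % m + 1 = m := by omega
    rw [Nat.add_right_comm, Nat.add_mul_mod_self_left, h2, Nat.mod_self]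

private lemma sigma_pow_apply (m : ℕ) (hm : 3 ≤ m) (σ : Equiv.Perm (Fin (2 * m)))
    (hσ : ∀ i : Fin (2 * m), ((σ i : Fin (2 * m)) : ℕ) =
      if (i : ℕ) = m - 1 then 0 else if (i : ℕ) = 2 * m - 1 then m else (i : ℕ) + 1)
    (a : ℕ) (i : Fin (2 * m)) :
    (((σ ^ a) i : Fin (2 * m)) : ℕ) =
      if (i : ℕ) < m then ((i : ℕ) + a) % m else m + ((i : ℕ) - m + a) % m := by
  have hi := i.isLt
  induction a with
  | zero =>
    simp only [pow_zero, Equiv.Perm.one_apply]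
    split_ifs with h
    · rw [Nat.mod_eq_of_lt (by omega)]; omega
    · rw [Nat.mod_eq_of_lt (by omega)]; omega
  | succ a ih =>
    rw [pow_succ', Equiv.Perm.mul_apply, hσ, ih, ← Nat.add_assoc, ← Nat.add_assoc,
      step_mod m ((i : ℕ) + a) (by omega), step_mod m ((i : ℕ) - m + a) (by omega)]
    have h1 := Nat.mod_lt ((i : ℕ) + a) (show 0 < m by omega)
    have h2 := Nat.mod_lt ((i : ℕ) - m + a) (show 0 < m by omega)
    split_ifs <;> omega

private lemma swap_val (n : ℕ) (a b i : Fin n) :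
    ((Equiv.swap a b i : Fin n) : ℕ) =
      if (i : ℕ) = (a : ℕ) then (b : ℕ) else if (i : ℕ) = (b : ℕ) then (a : ℕ) else (i : ℕ) := by
  rw [Equiv.swap_apply_def]
  simp only [Fin.ext_iff]
  split_ifs <;> simp_all

private lemma tau_apply (m : ℕ) (hm : 2 < m) (τ : Equiv.Perm (Fin (2 * m)))
    (hτ : τ = Equiv.swap (⟨0, by omega⟩ : Fin (2 * m)) ⟨1, by omega⟩ *
      Equiv.swap (⟨m - 1, by omega⟩ : Fin (2 * m)) ⟨2 * m - 1, by omega⟩)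
    (i : Fin (2 * m)) :
    ((τ i : Fin (2 * m)) : ℕ) =
      if (i : ℕ) = 0 then 1 else if (i : ℕ) = 1 then 0
      else if (i : ℕ) = m - 1 then 2 * m - 1
      else if (i : ℕ) = 2 * m - 1 then m - 1 else (i : ℕ) := by
  have hi := i.isLt
  subst hτ
  rw [Equiv.Perm.mul_apply, swap_val, swap_val]
  simp only [Fin.val_mk]
  split_ifs <;> omega

private lemma tau_sq (m : ℕ) (hm : 2 < m) (τ : Equiv.Perm (Fin (2 * m)))
    (hτ : τ = Equiv.swap (⟨0, by omega⟩ : Fin (2 * m)) ⟨1, by omega⟩ *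
      Equiv.swap (⟨m - 1, by omega⟩ : Fin (2 * m)) ⟨2 * m - 1, by omega⟩) :
    τ * τ = 1 := by
  ext i
  have hi := i.isLt
  have h2 := tau_apply m hm τ hτ i
  have h3 := tau_apply m hm τ hτ (τ i)
  have h1 : ((1 : Equiv.Perm (Fin (2 * m))) i : ℕ) = (i : ℕ) := rfl
  rw [Equiv.Perm.mul_apply, h1, h3]
  split_ifs at h2 <;> rw [h2] <;> norm_num <;> (try split_ifs) <;> omega

private lemma zpow_reduce {G : Type*} [Group G] (g : G) (k : ℕ) (hk : 0 < k)
    (h1 : g ^ k = 1) (z : ℤ) : ∃ a : ℕ, a < k ∧ g ^ z = g ^ a := by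
  have h2 : (0:ℤ) < k := by exact_mod_cast hk
  have h3 := Int.emod_nonneg z (by omega : (k:ℤ) ≠ 0)
  have h4 := Int.emod_lt_of_pos z h2
  refine ⟨(z % k).toNat, by omega, ?_⟩
  rw [← zpow_natCast g (z % (k:ℤ)).toNat, Int.toNat_of_nonneg h3]
  conv_lhs => rw [show z = z % k + k * (z / k) from (Int.emod_add_mul_ediv z k).symm]
  rw [zpow_add, zpow_mul, zpow_natCast, h1, one_zpow, mul_one]

/-- Let `m ≥ 3`, `n = 2m`, and work in `A_n` acting on `Fin (2m)` (the `i`-th point of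
`{1, …, 2m}` corresponding to `i - 1 : Fin (2m)`). Let
`σ₁ = (1, 2, …, m)(m+1, m+2, …, 2m)` (sending point `i` to `i + 1` within each block,
with `m ↦ 1` and `2m ↦ m+1`), `σ₂ = (1, 2)(m, 2m)`, `K₁ = ⟨σ₁⟩`, `K₂ = ⟨σ₂⟩`, and let
`H` be the stabilizer in `A_n` of the last point `2m`. Then `(K₁, K₂, H)` is a uniform
group factorization of `A_n` with multiplicity `1`. -/
theorem alternatingGroup_even_factorization
    (m : ℕ) (hm : 3 ≤ m)
    (σ₁ σ₂ : alternatingGroup (Fin (2 * m)))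
    (hσ₁ : ∀ i : Fin (2 * m),
      (((σ₁ : Equiv.Perm (Fin (2 * m))) i : Fin (2 * m)) : ℕ) =
        if (i : ℕ) = m - 1 then 0 else if (i : ℕ) = 2 * m - 1 then m else (i : ℕ) + 1)
    (hσ₂ : (σ₂ : Equiv.Perm (Fin (2 * m))) =
      Equiv.swap (⟨0, by omega⟩ : Fin (2 * m)) ⟨1, by omega⟩ *
        Equiv.swap (⟨m - 1, by omega⟩ : Fin (2 * m)) ⟨2 * m - 1, by omega⟩) :
    ∀ ρ : alternatingGroup (Fin (2 * m)),
      multCount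
        [((Subgroup.zpowers σ₁ : Subgroup (alternatingGroup (Fin (2 * m)))) :
            Set (alternatingGroup (Fin (2 * m)))),
         ((Subgroup.zpowers σ₂ : Subgroup (alternatingGroup (Fin (2 * m)))) :
            Set (alternatingGroup (Fin (2 * m)))),
         ((MulAction.stabilizer (alternatingGroup (Fin (2 * m)))
            (⟨2 * m - 1, by omega⟩ : Fin (2 * m)) :
            Subgroup (alternatingGroup (Fin (2 * m)))) :
            Set (alternatingGroup (Fin (2 * m))))] ρ = 1 := by
  intro ρ
  have hm0 : 0 < m := by omega
  set pt : Fin (2 * m) := ⟨2 * m - 1, by omega⟩ with hptdef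
  have hptv : (pt : ℕ) = 2 * m - 1 := rfl
  -- perm-level order facts
  have hσm : (σ₁ : Equiv.Perm (Fin (2 * m))) ^ m = 1 := by
    ext i
    have hi := i.isLt
    have h1 : ((1 : Equiv.Perm (Fin (2 * m))) i : ℕ) = (i : ℕ) := rfl
    rw [sigma_pow_apply m hm _ hσ₁ m i, h1]
    split_ifs with h
    · rw [Nat.add_mod_right, Nat.mod_eq_of_lt h]
    · rw [Nat.add_mod_right, Nat.mod_eq_of_lt (by omega)]; omega
  have hs1m : σ₁ ^ m = 1 := by
    apply Subtype.ext; simpa using hσm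
  have hs2sq : σ₂ ^ 2 = 1 := by
    apply Subtype.ext
    have := tau_sq m hm _ hσ₂
    simpa [sq] using this
  -- evaluation of σ₁^a σ₂^b at pt
  have heval : ∀ (a b : ℕ), b < 2 →
      (((σ₁ ^ a * σ₂ ^ b : alternatingGroup (Fin (2 * m))) :
        Equiv.Perm (Fin (2 * m))) pt : ℕ) =
        if b = 0 then m + (m - 1 + a) % m else (m - 1 + a) % m := by
    intro a b hb
    have hcoe : ((σ₁ ^ a * σ₂ ^ b : alternatingGroup (Fin (2 * m))) :
        Equiv.Perm (Fin (2 * m))) =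
        ((σ₁ : Equiv.Perm (Fin (2 * m))) ^ a) * ((σ₂ : Equiv.Perm (Fin (2 * m))) ^ b) := by
      push_cast; rfl
    rw [hcoe, Equiv.Perm.mul_apply]
    interval_cases b
    · simp only [pow_zero, Equiv.Perm.one_apply, if_true, eq_self_iff_true]
      rw [sigma_pow_apply m hm _ hσ₁ a pt, if_neg (by omega), hptv]
      congr 2
      omega
    · simp only [pow_one]
      have hτpt : (((σ₂ : Equiv.Perm (Fin (2 * m))) pt : Fin (2 * m)) : ℕ) = m - 1 := by
        rw [tau_apply m hm _ hσ₂ pt, hptv]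
        rw [if_neg (by omega), if_neg (by omega), if_neg (by omega), if_pos rfl]
      rw [sigma_pow_apply m hm _ hσ₁ a _, if_pos (by omega), hτpt, if_neg (by omega)]
  -- `a` is determined by the value
  have hainj : ∀ a a' : ℕ, a < m → a' < m →
      (m - 1 + a) % m = (m - 1 + a') % m → a = a' := by
    intro a a' ha ha' h
    have h2 : a ≡ a' [MOD m] := Nat.ModEq.add_left_cancel' (m - 1) h
    unfold Nat.ModEq at h2
    rwa [Nat.mod_eq_of_lt ha, Nat.mod_eq_of_lt ha'] at h2
  rw [multCount, Nat.card_eq_one_iff_unique]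
  constructor
  · -- uniqueness
    constructor
    rintro ⟨l, hl, hp⟩ ⟨l', hl', hp'⟩
    apply Subtype.ext
    simp only
    rcases hl with _ | ⟨hk₁, hl⟩
    rcases hl with _ | ⟨hk₂, hl⟩
    rcases hl with _ | ⟨hh, hl⟩
    rcases hl
    rcases hl' with _ | ⟨hk₁', hl'⟩
    rcases hl' with _ | ⟨hk₂', hl'⟩
    rcases hl' with _ | ⟨hh', hl'⟩
    rcases hl'
    rename_i k₁ k₂ h k₁' k₂' h'
    obtain ⟨z₁, hz₁⟩ := hk₁
    obtain ⟨z₂, hz₂⟩ := hk₂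
    obtain ⟨z₁', hz₁'⟩ := hk₁'
    obtain ⟨z₂', hz₂'⟩ := hk₂'
    obtain ⟨a, ha, hae⟩ := zpow_reduce σ₁ m hm0 hs1m z₁
    obtain ⟨b, hb, hbe⟩ := zpow_reduce σ₂ 2 (by omega) hs2sq z₂
    obtain ⟨a', ha', hae'⟩ := zpow_reduce σ₁ m hm0 hs1m z₁'
    obtain ⟨b', hb', hbe'⟩ := zpow_reduce σ₂ 2 (by omega) hs2sq z₂'
    have hk₁a : k₁ = σ₁ ^ a := by rw [← hz₁]; exact hae
    have hk₂b : k₂ = σ₂ ^ b := by rw [← hz₂]; exact hbe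
    have hk₁a' : k₁' = σ₁ ^ a' := by rw [← hz₁']; exact hae'
    have hk₂b' : k₂' = σ₂ ^ b' := by rw [← hz₂']; exact hbe'
    have hstab : ((h : Equiv.Perm (Fin (2 * m))) pt) = pt :=
      MulAction.mem_stabilizer_iff.mp (SetLike.mem_coe.mp hh)
    have hstab' : ((h' : Equiv.Perm (Fin (2 * m))) pt) = pt :=
      MulAction.mem_stabilizer_iff.mp (SetLike.mem_coe.mp hh')
    have hprod : (σ₁ ^ a * σ₂ ^ b) * h = ρ := by
      rw [← hk₁a, ← hk₂b]
      simpa [mul_assoc] using hp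
    have hprod' : (σ₁ ^ a' * σ₂ ^ b') * h' = ρ := by
      rw [← hk₁a', ← hk₂b']
      simpa [mul_assoc] using hp'
    have hval : (((σ₁ ^ a * σ₂ ^ b : alternatingGroup (Fin (2 * m))) :
        Equiv.Perm (Fin (2 * m))) pt : ℕ) =
        (((ρ : Equiv.Perm (Fin (2 * m))) pt : Fin (2 * m)) : ℕ) := by
      rw [← hprod]
      have e1 : ((((σ₁ ^ a * σ₂ ^ b) * h : alternatingGroup (Fin (2 * m))) :
          Equiv.Perm (Fin (2 * m))) pt) =
          ((σ₁ ^ a * σ₂ ^ b : alternatingGroup (Fin (2 * m))) :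
            Equiv.Perm (Fin (2 * m))) ((h : Equiv.Perm (Fin (2 * m))) pt) := rfl
      rw [e1, hstab]
    have hval' : (((σ₁ ^ a' * σ₂ ^ b' : alternatingGroup (Fin (2 * m))) :
        Equiv.Perm (Fin (2 * m))) pt : ℕ) =
        (((ρ : Equiv.Perm (Fin (2 * m))) pt : Fin (2 * m)) : ℕ) := by
      rw [← hprod']
      have e1 : ((((σ₁ ^ a' * σ₂ ^ b') * h' : alternatingGroup (Fin (2 * m))) :
          Equiv.Perm (Fin (2 * m))) pt) =
          ((σ₁ ^ a' * σ₂ ^ b' : alternatingGroup (Fin (2 * m))) :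
            Equiv.Perm (Fin (2 * m))) ((h' : Equiv.Perm (Fin (2 * m))) pt) := rfl
      rw [e1, hstab']
    rw [heval a b hb] at hval
    rw [heval a' b' hb'] at hval'
    have hmod1 := Nat.mod_lt (m - 1 + a) hm0
    have hmod2 := Nat.mod_lt (m - 1 + a') hm0
    have hbb : b = b' := by
      interval_cases b <;> interval_cases b' <;>
        first
        | rfl
        | (exfalso; rw [if_pos rfl] at hval; rw [if_neg one_ne_zero] at hval'; omega)
        | (exfalso; rw [if_neg one_ne_zero] at hval; rw [if_pos rfl] at hval'; omega)
    subst hbb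
    have haa : a = a' := by
      apply hainj a a' ha ha'
      interval_cases b
      · rw [if_pos rfl] at hval hval'; omega
      · rw [if_neg one_ne_zero] at hval hval'; omega
    subst haa
    have hhh : h = h' := by
      have := hprod.trans hprod'.symm
      exact mul_left_cancel this
    rw [hk₁a, hk₁a', hk₂b, hk₂b', hhh]
  · -- existence
    set t : ℕ := (((ρ : Equiv.Perm (Fin (2 * m))) pt : Fin (2 * m)) : ℕ) with htdef
    have ht : t < 2 * m := ((ρ : Equiv.Perm (Fin (2 * m))) pt).isLt
    obtain ⟨a, b, hb2, hvaleq⟩ : ∃ a b, b < 2 ∧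
        (if b = 0 then m + (m - 1 + a) % m else (m - 1 + a) % m) = t := by
      rcases Nat.lt_or_ge t m with h | h
      · refine ⟨(t + 1) % m, 1, by omega, ?_⟩
        rw [if_neg (by omega), Nat.add_mod_mod,
          show m - 1 + (t + 1) = m + t by omega, Nat.add_mod_left, Nat.mod_eq_of_lt h]
      · refine ⟨(t + 1 - m) % m, 0, by omega, ?_⟩
        rw [if_pos rfl, Nat.add_mod_mod, show m - 1 + (t + 1 - m) = t by omega]
        have h5 : t % m = t - m := by
          conv_lhs => rw [show t = m + (t - m) from by omega]
          rw [Nat.add_mod_left, Nat.mod_eq_of_lt (by omega)]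
        rw [h5]
        omega
    have hveq : ((σ₁ ^ a * σ₂ ^ b : alternatingGroup (Fin (2 * m))) :
        Equiv.Perm (Fin (2 * m))) pt = (ρ : Equiv.Perm (Fin (2 * m))) pt := by
      rw [Fin.ext_iff, heval a b hb2]
      exact hvaleq
    have hsmem : (σ₁ ^ a * σ₂ ^ b)⁻¹ * ρ ∈
        MulAction.stabilizer (alternatingGroup (Fin (2 * m))) pt := by
      rw [MulAction.mem_stabilizer_iff]
      show ((((σ₁ ^ a * σ₂ ^ b)⁻¹ * ρ : alternatingGroup (Fin (2 * m))) :
        Equiv.Perm (Fin (2 * m)))) pt = pt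
      have e1 : ((((σ₁ ^ a * σ₂ ^ b)⁻¹ * ρ : alternatingGroup (Fin (2 * m))) :
          Equiv.Perm (Fin (2 * m)))) pt =
          ((σ₁ ^ a * σ₂ ^ b : alternatingGroup (Fin (2 * m))) :
            Equiv.Perm (Fin (2 * m)))⁻¹ ((ρ : Equiv.Perm (Fin (2 * m))) pt) := rfl
      rw [e1, ← hveq, Equiv.Perm.inv_eq_iff_eq]
    refine ⟨⟨[σ₁ ^ a, σ₂ ^ b, (σ₁ ^ a * σ₂ ^ b)⁻¹ * ρ], ?_, ?_⟩⟩
    · refine List.Forall₂.cons ?_ (List.Forall₂.cons ?_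
        (List.Forall₂.cons ?_ List.Forall₂.nil))
      · exact SetLike.mem_coe.mpr ⟨(a : ℤ), by exact zpow_natCast _ _⟩
      · exact SetLike.mem_coe.mpr ⟨(b : ℤ), by exact zpow_natCast _ _⟩
      · exact SetLike.mem_coe.mpr hsmem
    · simp [mul_assoc]
end
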